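/- Let q ≥ 1, let ξ ∈ L¹(ℝ^q) be measurable, let n ≥ 1 be a natural number, and let (Ω, 𝒞, ℙ) be a probability space with a jointly measurable noise ε : Ω × ℝ^q → ℝ whose realizations ε_ω lie in L¹(ℝ^q) and for which ω ↦ ‖ε_ω‖_{L¹(ℝ^q)} is integrable. Then E[‖S_n(ε_ω)‖_{L¹(ℝ^q)}] ≤ ‖ξ‖_{L¹(ℝ^q)} E[‖ε_ω‖_{L¹(ℝ^q)}], where the constant ‖ξ‖_{L¹} is independent of both n and ω. -/

import Mathlib

open MeasureTheory

/-- The cell `D_k^n = ∏_{j=1}^q [k_j/n, (k_j+1)/n)` of the uniform grid of step `1/n`. -/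
def cell (q n : ℕ) (k : Fin q → ℤ) : Set (EuclideanSpace ℝ (Fin q)) :=
  (WithLp.ofLp : EuclideanSpace ℝ (Fin q) → Fin q → ℝ) ⁻¹'
    Set.univ.pi fun j => Set.Ico ((k j : ℝ) / n) (((k j : ℝ) + 1) / n)

/-- The sampling Kantorovich operator
`S_n(f)(x) = n^q ∑_{k ∈ ℤ^q} ξ(n x − k) ∫_{D_k^n} f(u) du`. -/
noncomputable def SK (q : ℕ) (ξ : EuclideanSpace ℝ (Fin q) → ℝ) (n : ℕ)
    (f : EuclideanSpace ℝ (Fin q) → ℝ) (x : EuclideanSpace ℝ (Fin q)) : ℝ :=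
  (n : ℝ) ^ q * ∑' k : Fin q → ℤ,
    ξ (WithLp.toLp 2 fun j => (n : ℝ) * x j - (k j : ℝ)) * ∫ u in cell q n k, f u

open scoped ENNReal NNReal

section Aux

lemma SKaux_Ico_iff {n : ℕ} (hn0 : (0:ℝ) < n) (m : ℤ) (t : ℝ) :
    ((m : ℝ) / n ≤ t ∧ t < ((m : ℝ) + 1) / n) ↔ m = ⌊(n : ℝ) * t⌋ := by
  rw [eq_comm, Int.floor_eq_iff, div_le_iff₀ hn0, lt_div_iff₀ hn0, mul_comm t (n:ℝ)]

lemma SKaux_mem_cell {q n : ℕ} (hn0 : (0:ℝ) < n) {k : Fin q → ℤ}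
    {x : EuclideanSpace ℝ (Fin q)} :
    x ∈ cell q n k ↔ ∀ j, k j = ⌊(n : ℝ) * x j⌋ := by
  rw [cell, Set.mem_preimage, Set.mem_univ_pi]
  exact forall_congr' fun j => by
    simpa only [Set.mem_Ico] using SKaux_Ico_iff hn0 (k j) (x j)

lemma SKaux_cell_measurable (q n : ℕ) (k : Fin q → ℤ) : MeasurableSet (cell q n k) :=
  (MeasurableSet.univ_pi fun _ => measurableSet_Ico).preimage
    (WithLp.measurable_ofLp 2 (Fin q → ℝ))

lemma SKaux_cell_disjoint {q n : ℕ} (hn0 : (0:ℝ) < n) :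
    Pairwise (Function.onFun Disjoint (cell q n)) := by
  intro k k' hne
  rw [Function.onFun, Set.disjoint_left]
  intro x hx hx'
  exact hne (funext fun j =>
    ((SKaux_mem_cell hn0).mp hx j).trans ((SKaux_mem_cell hn0).mp hx' j).symm)

lemma SKaux_cell_union {q n : ℕ} (hn0 : (0:ℝ) < n) :
    (⋃ k : Fin q → ℤ, cell q n k) = Set.univ := by
  ext x
  simp only [Set.mem_iUnion, Set.mem_univ, iff_true]
  exact ⟨fun j => ⌊(n : ℝ) * x j⌋, (SKaux_mem_cell hn0).mpr fun j => rfl⟩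

lemma SKaux_tsum_cell {q n : ℕ} (hn0 : (0:ℝ) < n) (g : EuclideanSpace ℝ (Fin q) → ℝ≥0∞) :
    ∑' k : Fin q → ℤ, ∫⁻ u in cell q n k, g u = ∫⁻ u, g u := by
  rw [← lintegral_iUnion (fun k => SKaux_cell_measurable q n k) (SKaux_cell_disjoint hn0) g,
    SKaux_cell_union hn0, Measure.restrict_univ]

lemma SKaux_ennnorm_tsum_le {ι : Type*} (a : ι → ℝ) :
    (‖∑' i, a i‖₊ : ℝ≥0∞) ≤ ∑' i, (‖a i‖₊ : ℝ≥0∞) := by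
  by_cases h : Summable fun i => ‖a i‖₊
  · rw [← ENNReal.coe_tsum h]
    exact ENNReal.coe_le_coe.mpr (nnnorm_tsum_le h)
  · have : (∑' i, (‖a i‖₊ : ℝ≥0∞)) = ⊤ := by
      by_contra hc
      exact h (ENNReal.tsum_coe_ne_top_iff_summable.1 hc)
    simp [this]

lemma SKaux_scaling {q n : ℕ} (hn : 1 ≤ n) (ξ : EuclideanSpace ℝ (Fin q) → ℝ)
    (hmeas : Measurable ξ) (k : Fin q → ℤ) :
    ∫⁻ x : EuclideanSpace ℝ (Fin q), (‖ξ (WithLp.toLp 2 fun j => (n : ℝ) * x j - (k j : ℝ))‖₊ : ℝ≥0∞)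
      = ENNReal.ofReal (((n : ℝ) ^ q)⁻¹)
          * ∫⁻ x : EuclideanSpace ℝ (Fin q), (‖ξ x‖₊ : ℝ≥0∞) := by
  have hn0 : (0:ℝ) < n := by exact_mod_cast hn
  have hr : (n : ℝ) ≠ 0 := ne_of_gt hn0
  set kv : EuclideanSpace ℝ (Fin q) := WithLp.toLp 2 (fun j => (k j : ℝ)) with hkv
  have hg : Measurable fun y : EuclideanSpace ℝ (Fin q) => (‖ξ (y - kv)‖₊ : ℝ≥0∞) :=
    ((hmeas.comp (measurable_id.sub measurable_const)).nnnorm).coe_nnreal_ennreal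
  have key : ∀ x : EuclideanSpace ℝ (Fin q),
      (WithLp.toLp 2 fun j => (n : ℝ) * x j - (k j : ℝ)) = (n : ℝ) • x - kv := fun x => by
    ext j; simp [kv]
  calc ∫⁻ x : EuclideanSpace ℝ (Fin q), (‖ξ (WithLp.toLp 2 fun j => (n : ℝ) * x j - (k j : ℝ))‖₊ : ℝ≥0∞)
      = ∫⁻ x : EuclideanSpace ℝ (Fin q), (‖ξ ((n : ℝ) • x - kv)‖₊ : ℝ≥0∞) := by simp_rw [key]
    _ = ∫⁻ y, (‖ξ (y - kv)‖₊ : ℝ≥0∞) ∂(Measure.map (((n : ℝ)) • ·) volume) :=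
        (lintegral_map hg (measurable_const_smul _)).symm
    _ = ENNReal.ofReal |((n : ℝ) ^ (Module.finrank ℝ (EuclideanSpace ℝ (Fin q))))⁻¹|
          * ∫⁻ y, (‖ξ (y - kv)‖₊ : ℝ≥0∞) := by
        rw [Measure.map_addHaar_smul volume hr, lintegral_smul_measure, smul_eq_mul]
    _ = ENNReal.ofReal (((n : ℝ) ^ q)⁻¹) * ∫⁻ x, (‖ξ x‖₊ : ℝ≥0∞) := by
        rw [finrank_euclideanSpace_fin,
          lintegral_sub_right_eq_self (fun y => (‖ξ y‖₊ : ℝ≥0∞)) kv,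
          abs_of_nonneg (by positivity)]

lemma SKaux_lintegral_SK_le {q n : ℕ} (hn : 1 ≤ n)
    (ξ f : EuclideanSpace ℝ (Fin q) → ℝ) (hmeas : Measurable ξ) :
    ∫⁻ x, (‖SK q ξ n f x‖₊ : ℝ≥0∞)
      ≤ (∫⁻ x, (‖ξ x‖₊ : ℝ≥0∞)) * ∫⁻ x, (‖f x‖₊ : ℝ≥0∞) := by
  have hn0 : (0:ℝ) < n := by exact_mod_cast hn
  set I : ℝ≥0∞ := ∫⁻ x, (‖ξ x‖₊ : ℝ≥0∞) with hI
  set c : (Fin q → ℤ) → ℝ≥0∞ := fun k => ∫⁻ u in cell q n k, (‖f u‖₊ : ℝ≥0∞) with hc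
  have hTmeas : ∀ k : Fin q → ℤ,
      Measurable fun x : EuclideanSpace ℝ (Fin q) =>
        (‖ξ (WithLp.toLp 2 fun j => (n : ℝ) * x j - (k j : ℝ))‖₊ : ℝ≥0∞) := by
    intro k
    exact ((hmeas.comp ((WithLp.measurable_toLp 2 (Fin q → ℝ)).comp (measurable_pi_lambda _ fun j =>
      (((measurable_pi_apply j).comp (WithLp.measurable_ofLp 2 (Fin q → ℝ))).const_mul _).sub
        measurable_const))).nnnorm).coe_nnreal_ennreal
  have hpt : ∀ x, (‖SK q ξ n f x‖₊ : ℝ≥0∞)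
      ≤ (n : ℝ≥0∞) ^ q * ∑' k : Fin q → ℤ,
          (‖ξ (WithLp.toLp 2 fun j => (n : ℝ) * x j - (k j : ℝ))‖₊ : ℝ≥0∞) * c k := by
    intro x
    rw [SK, nnnorm_mul, ENNReal.coe_mul]
    have h1 : ((‖(n : ℝ) ^ q‖₊ : ℝ≥0) : ℝ≥0∞) = (n : ℝ≥0∞) ^ q := by
      simp [nnnorm_pow]
    rw [h1]
    refine mul_le_mul_right ?_ _
    refine le_trans (SKaux_ennnorm_tsum_le _) (ENNReal.tsum_le_tsum fun k => ?_)
    rw [nnnorm_mul, ENNReal.coe_mul]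
    exact mul_le_mul_right (enorm_integral_le_lintegral_enorm _) _
  calc ∫⁻ x, (‖SK q ξ n f x‖₊ : ℝ≥0∞)
      ≤ ∫⁻ x, (n : ℝ≥0∞) ^ q * ∑' k : Fin q → ℤ,
          (‖ξ (WithLp.toLp 2 fun j => (n : ℝ) * x j - (k j : ℝ))‖₊ : ℝ≥0∞) * c k := lintegral_mono hpt
    _ = (n : ℝ≥0∞) ^ q * ∑' k : Fin q → ℤ,
          (∫⁻ x : EuclideanSpace ℝ (Fin q),
            (‖ξ (WithLp.toLp 2 fun j => (n : ℝ) * x j - (k j : ℝ))‖₊ : ℝ≥0∞)) * c k := by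
        rw [lintegral_const_mul' _ _ (by simp : ((n : ℝ≥0∞) ^ q) ≠ ⊤),
          lintegral_tsum fun k => ((hTmeas k).mul_const _).aemeasurable]
        congr 1
        exact tsum_congr fun k => lintegral_mul_const _ (hTmeas k)
    _ = (n : ℝ≥0∞) ^ q * ∑' k : Fin q → ℤ,
          (ENNReal.ofReal (((n : ℝ) ^ q)⁻¹) * I) * c k := by
        congr 1
        exact tsum_congr fun k => by rw [SKaux_scaling hn ξ hmeas k]
    _ = ((n : ℝ≥0∞) ^ q * ENNReal.ofReal (((n : ℝ) ^ q)⁻¹)) * I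
          * ∑' k : Fin q → ℤ, c k := by
        rw [ENNReal.tsum_mul_left]
        ring
    _ = I * ∫⁻ x, (‖f x‖₊ : ℝ≥0∞) := by
        have h2 : ENNReal.ofReal (((n : ℝ) ^ q)⁻¹) = ((n : ℝ≥0∞) ^ q)⁻¹ := by
          rw [ENNReal.ofReal_inv_of_pos (by positivity), ENNReal.ofReal_pow (by positivity),
            ENNReal.ofReal_natCast]
        rw [h2, ENNReal.mul_inv_cancel (by positivity) (by simp), one_mul,
          SKaux_tsum_cell hn0]

lemma SKaux_L1_le {q n : ℕ} (hn : 1 ≤ n)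
    (ξ f : EuclideanSpace ℝ (Fin q) → ℝ) (hmeas : Measurable ξ)
    (hξ : Integrable ξ) (hfi : Integrable f) :
    ∫ x, |SK q ξ n f x| ≤ (∫ x, |ξ x|) * ∫ x, |f x| := by
  have habs : ∀ g : EuclideanSpace ℝ (Fin q) → ℝ, AEStronglyMeasurable g volume →
      ∫ x, |g x| = (∫⁻ x, (‖g x‖₊ : ℝ≥0∞)).toReal := by
    intro g hg
    simp_rw [← Real.norm_eq_abs]
    exact integral_norm_eq_lintegral_enorm hg
  have hIξ : (∫⁻ x, (‖ξ x‖₊ : ℝ≥0∞)) ≠ ⊤ := ne_of_lt hξ.2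
  have hIf : (∫⁻ x, (‖f x‖₊ : ℝ≥0∞)) ≠ ⊤ := ne_of_lt hfi.2
  have hrhs : (∫ x, |ξ x|) * ∫ x, |f x|
      = ((∫⁻ x, (‖ξ x‖₊ : ℝ≥0∞)) * ∫⁻ x, (‖f x‖₊ : ℝ≥0∞)).toReal := by
    rw [ENNReal.toReal_mul, habs ξ hξ.1, habs f hfi.1]
  by_cases hsk : Integrable (fun x => |SK q ξ n f x|) volume
  · have heq : ∫ x, |SK q ξ n f x| = (∫⁻ x, (‖SK q ξ n f x‖₊ : ℝ≥0∞)).toReal := by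
      have h := habs (fun x => |SK q ξ n f x|) hsk.1
      simpa only [abs_abs, Real.nnnorm_abs] using h
    rw [heq, hrhs]
    exact ENNReal.toReal_mono (ENNReal.mul_ne_top hIξ hIf)
      (SKaux_lintegral_SK_le hn ξ f hmeas)
  · rw [integral_undef hsk]
    exact mul_nonneg (integral_nonneg fun x => abs_nonneg _)
      (integral_nonneg fun x => abs_nonneg _)

end Aux

/-- the expected `L¹` norm of the SK operator applied to the noise satisfies
`E[‖S_n(ε_ω)‖₁] ≤ ‖ξ‖₁ E[‖ε_ω‖₁]`, with the constant `‖ξ‖₁` independent of `n` and `ω`. -/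
theorem SK_noise_expected_bound (q : ℕ) (hq : 1 ≤ q)
    (ξ : EuclideanSpace ℝ (Fin q) → ℝ) (hmeas : Measurable ξ) (hξ : Integrable ξ)
    (n : ℕ) (hn : 1 ≤ n)
    (Ω : Type*) [MeasureSpace Ω] [IsProbabilityMeasure (volume : Measure Ω)]
    (ε : Ω → EuclideanSpace ℝ (Fin q) → ℝ)
    (hεmeas : Measurable (Function.uncurry ε))
    (hεint : ∀ ω : Ω, Integrable (ε ω))
    (hεnorm : Integrable fun ω : Ω => ∫ x : EuclideanSpace ℝ (Fin q), |ε ω x|) :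
    (∫ ω : Ω, ∫ x : EuclideanSpace ℝ (Fin q), |SK q ξ n (ε ω) x|)
      ≤ (∫ x : EuclideanSpace ℝ (Fin q), |ξ x|)
          * ∫ ω : Ω, ∫ x : EuclideanSpace ℝ (Fin q), |ε ω x| := by
  have hpt : ∀ ω : Ω, ∫ x, |SK q ξ n (ε ω) x|
      ≤ (∫ x, |ξ x|) * ∫ x, |ε ω x| := fun ω =>
    SKaux_L1_le hn ξ (ε ω) hmeas hξ (hεint ω)
  by_cases hF : Integrable (fun ω : Ω => ∫ x, |SK q ξ n (ε ω) x|) volume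
  · calc (∫ ω : Ω, ∫ x, |SK q ξ n (ε ω) x|)
        ≤ ∫ ω : Ω, (∫ x, |ξ x|) * ∫ x, |ε ω x| :=
          integral_mono hF (hεnorm.const_mul _) hpt
      _ = (∫ x, |ξ x|) * ∫ ω : Ω, ∫ x, |ε ω x| := integral_const_mul _ _
  · rw [integral_undef hF]
    exact mul_nonneg (integral_nonneg fun x => abs_nonneg _)
      (integral_nonneg fun ω => integral_nonneg fun x => abs_nonneg _)
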